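/- Let S be a numerical semigroup with gap set G(S), and let t be a nonzero even element of S with Apéry set 𝒜 = Ap(S;t). Then O(G(S)) − E(G(S)) = −1/2 + (σ_O(𝒜) − σ_E(𝒜))/t; equivalently, 2t(O(G(S)) − E(G(S))) = −t + 2(σ_O(𝒜) − σ_E(𝒜)). -/

import Mathlib

/-- `S` is a numerical semigroup: an additive submonoid of `ℕ` with finite complement. -/
def IsNumericalSemigroup (S : Set ℕ) : Prop :=
  0 ∈ S ∧ (∀ a ∈ S, ∀ b ∈ S, a + b ∈ S) ∧ Sᶜ.Finite

/-- The Apéry set of `S` relative to `t`: the elements `s ∈ S` such that `s - t ∉ S`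
(as integers, i.e. there is no `u ∈ S` with `s = u + t`). -/
def aperySet (S : Set ℕ) (t : ℕ) : Set ℕ :=
  {s ∈ S | ¬ ∃ u ∈ S, s = u + t}

/-- `O(T)`: the number of odd elements of `T`. -/
noncomputable def countOdd (T : Set ℕ) : ℕ := {x ∈ T | Odd x}.ncard

/-- `E(T)`: the number of even elements of `T`. -/
noncomputable def countEven (T : Set ℕ) : ℕ := {x ∈ T | Even x}.ncard

/-- `σ_O(T)`: the sum of the odd elements of `T`. -/
noncomputable def sumOdd (T : Set ℕ) : ℕ := ∑ᶠ x ∈ {y ∈ T | Odd y}, x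

/-- `σ_E(T)`: the sum of the even elements of `T`. -/
noncomputable def sumEven (T : Set ℕ) : ℕ := ∑ᶠ x ∈ {y ∈ T | Even y}, x

/-- The minimal element of `S` congruent to `i` modulo `t`. -/
noncomputable def wmin (S : Set ℕ) (t i : ℕ) : ℕ := sInf {x | x ∈ S ∧ x % t = i}

section aux
variable {S : Set ℕ} {t : ℕ}

lemma add_mul_mem (hS : IsNumericalSemigroup S) (ht : t ∈ S) {a : ℕ} (ha : a ∈ S) (k : ℕ) :
    a + k * t ∈ S := by
  induction k with
  | zero => simpa using ha
  | succ n ih =>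
    have := hS.2.1 _ ih _ ht
    have h : a + n * t + t = a + (n+1) * t := by ring
    rwa [h] at this

lemma wmin_spec (hS : IsNumericalSemigroup S) (ht0 : t ≠ 0) {i : ℕ} (hi : i < t) :
    wmin S t i ∈ S ∧ wmin S t i % t = i := by
  have hne : {x | x ∈ S ∧ x % t = i}.Nonempty := by
    have hinf : {x : ℕ | x % t = i}.Infinite := by
      apply Set.infinite_of_injective_forall_mem (f := fun k : ℕ => i + k * t)
      · intro a b hab
        simp only at hab
        have : a * t = b * t := by omega
        exact Nat.eq_of_mul_eq_mul_right (Nat.pos_of_ne_zero ht0) this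
      · intro k
        simp [Nat.add_mul_mod_self_right, Nat.mod_eq_of_lt hi]
    have : ({x : ℕ | x % t = i} \ Sᶜ).Infinite := hinf.diff hS.2.2
    obtain ⟨x, hx⟩ := this.nonempty
    exact ⟨x, by simpa using hx.2, hx.1⟩
  exact Nat.sInf_mem hne

lemma wmin_le {x i : ℕ} (hx : x ∈ S) (hxi : x % t = i) :
    wmin S t i ≤ x := Nat.sInf_le ⟨hx, hxi⟩

lemma mem_iff_wmin_le (hS : IsNumericalSemigroup S) (ht : t ∈ S) (ht0 : t ≠ 0)
    {i : ℕ} (hi : i < t) {x : ℕ} (hxi : x % t = i) :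
    x ∈ S ↔ wmin S t i ≤ x := by
  constructor
  · intro hx; exact wmin_le hx hxi
  · intro hle
    obtain ⟨hw, hwi⟩ := wmin_spec hS ht0 hi
    have hmod : x ≡ wmin S t i [MOD t] := by
      unfold Nat.ModEq; rw [hxi, hwi]
    have hdvd : t ∣ x - wmin S t i := (Nat.modEq_iff_dvd' hle).mp hmod.symm
    obtain ⟨k, hk⟩ := hdvd
    have : x = wmin S t i + k * t := by rw [mul_comm]; omega
    rw [this]
    exact add_mul_mem hS ht hw k

lemma apery_eq (hS : IsNumericalSemigroup S) (ht : t ∈ S) (ht0 : t ≠ 0) :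
    aperySet S t = (wmin S t) '' (Set.Iio t) := by
  ext x
  constructor
  · rintro ⟨hxS, hnot⟩
    have hi : x % t < t := Nat.mod_lt _ (Nat.pos_of_ne_zero ht0)
    refine ⟨x % t, hi, ?_⟩
    obtain ⟨hw, hwi⟩ := wmin_spec hS ht0 hi
    have hle : wmin S t (x % t) ≤ x := wmin_le hxS rfl
    rcases eq_or_lt_of_le hle with h | h
    · exact h
    · exfalso
      have hmod : x ≡ wmin S t (x % t) [MOD t] := by
        unfold Nat.ModEq; rw [hwi]
      have hdvd : t ∣ x - wmin S t (x % t) := (Nat.modEq_iff_dvd' hle).mp hmod.symm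
      obtain ⟨k, hk⟩ := hdvd
      have hk0 : k ≠ 0 := by rintro rfl; omega
      have htk : t * 1 ≤ t * k := Nat.mul_le_mul_left t (Nat.one_le_iff_ne_zero.mpr hk0)
      have hu : (x - t) % t = x % t := by
        have : x - t + t = x := by omega
        conv_rhs => rw [← this]
        rw [Nat.add_mod_right]
      have huS : x - t ∈ S := by
        rw [mem_iff_wmin_le hS ht ht0 hi hu]
        omega
      exact hnot ⟨x - t, huS, by omega⟩
  · rintro ⟨i, hi, rfl⟩
    obtain ⟨hw, hwi⟩ := wmin_spec hS ht0 hi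
    refine ⟨hw, ?_⟩
    rintro ⟨u, huS, hu⟩
    have hui : u % t = i := by
      have : (u + t) % t = u % t := Nat.add_mod_right u t
      rw [← hu, hwi] at this; omega
    have := wmin_le huS hui
    omega

lemma parity_of_mod (hteven : Even t) {x i : ℕ} (hxi : x % t = i) :
    (Odd x ↔ Odd i) := by
  obtain ⟨m, hm⟩ := hteven
  have hdm := Nat.div_add_mod x t
  set q := x / t with hq
  have ha : t * q + i = x := by rw [hxi] at hdm; exact hdm
  have h2 : x % 2 = i % 2 := by
    have : t * q = (m * q) * 2 := by rw [hm]; ring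
    omega
  rw [Nat.odd_iff, Nat.odd_iff, h2]

lemma gap_count (hS : IsNumericalSemigroup S) (ht : t ∈ S) (ht0 : t ≠ 0)
    (P : ℕ → Prop) [DecidablePred P] (hP : ∀ x, P x ↔ P (x % t)) :
    {x ∈ Sᶜ | P x}.ncard
      = ∑ i ∈ (Finset.range t).filter P, wmin S t i / t := by
  set c : ℕ → ℕ := fun i => wmin S t i / t with hc
  have hdecomp : ∀ i < t, wmin S t i = c i * t + i := by
    intro i hi
    have h1 := (wmin_spec hS ht0 hi).2
    have h2 := Nat.div_add_mod (wmin S t i) t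
    rw [mul_comm] at h2
    simp only [hc]
    omega
  have hsetEq : {x ∈ Sᶜ | P x}
      = ↑(((Finset.range t).filter P).biUnion
          (fun i => (Finset.range (c i)).image (fun k => i + k * t))) := by
    ext x
    simp only [Set.mem_setOf_eq, Set.mem_compl_iff, Finset.mem_coe,
      Finset.mem_biUnion, Finset.mem_filter, Finset.mem_range, Finset.mem_image]
    constructor
    · rintro ⟨hxS, hPx⟩
      have hi : x % t < t := Nat.mod_lt _ (Nat.pos_of_ne_zero ht0)
      refine ⟨x % t, ⟨hi, (hP x).mp hPx⟩, x / t, ?_, ?_⟩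
      · have hlt : x < wmin S t (x % t) := by
          by_contra h
          exact hxS ((mem_iff_wmin_le hS ht ht0 hi rfl).mpr (by omega))
        have hd := hdecomp _ hi
        have hdm := Nat.div_add_mod x t
        rw [mul_comm] at hdm
        have : (x / t) * t < c (x % t) * t := by omega
        exact Nat.lt_of_mul_lt_mul_right this
      · have hdm := Nat.div_add_mod x t
        rw [mul_comm] at hdm
        omega
    · rintro ⟨i, ⟨hi, hPi⟩, k, hk, rfl⟩
      have hmod : (i + k * t) % t = i := by
        rw [Nat.add_mul_mod_self_right, Nat.mod_eq_of_lt hi]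
      have hlt : i + k * t < wmin S t i := by
        have hd := hdecomp _ hi
        have : k * t < c i * t := (Nat.mul_lt_mul_right (Nat.pos_of_ne_zero ht0)).mpr hk
        omega
      refine ⟨?_, (hP _).mpr (by rwa [hmod])⟩
      intro hmem
      have := (mem_iff_wmin_le hS ht ht0 hi hmod).mp hmem
      omega
  rw [hsetEq, Set.ncard_coe_finset]
  rw [Finset.card_biUnion]
  · apply Finset.sum_congr rfl
    intro i hi
    rw [Finset.card_image_of_injective _ (fun a b hab => by
      exact Nat.eq_of_mul_eq_mul_right (Nat.pos_of_ne_zero ht0) (by omega))]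
    rw [Finset.card_range]
  · intro i hi j hj hij
    simp only [Finset.coe_filter, Set.mem_setOf_eq, Finset.mem_coe, Finset.mem_filter, Finset.mem_range] at hi hj
    apply Finset.disjoint_left.mpr
    intro a hai haj
    simp only [Finset.mem_image, Finset.mem_range] at hai haj
    obtain ⟨k, _, hk⟩ := hai
    obtain ⟨l, _, hl⟩ := haj
    apply hij
    have h1 : a % t = i := by rw [← hk, Nat.add_mul_mod_self_right, Nat.mod_eq_of_lt hi.1]
    have h2 : a % t = j := by rw [← hl, Nat.add_mul_mod_self_right, Nat.mod_eq_of_lt hj.1]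
    omega

lemma apery_sum (hS : IsNumericalSemigroup S) (ht : t ∈ S) (ht0 : t ≠ 0)
    (P : ℕ → Prop) [DecidablePred P] (hP : ∀ x, P x ↔ P (x % t)) :
    (∑ᶠ x ∈ {y ∈ aperySet S t | P y}, x)
      = ∑ i ∈ (Finset.range t).filter P, wmin S t i := by
  have hinj : ∀ a ∈ (Finset.range t).filter P, ∀ b ∈ (Finset.range t).filter P,
      wmin S t a = wmin S t b → a = b := by
    intro a ha b hb hab
    simp only [Finset.mem_filter, Finset.mem_range] at ha hb
    have h1 := (wmin_spec hS ht0 ha.1).2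
    have h2 := (wmin_spec hS ht0 hb.1).2
    rw [hab] at h1
    omega
  have hsetEq : {y ∈ aperySet S t | P y}
      = ↑(((Finset.range t).filter P).image (wmin S t)) := by
    rw [apery_eq hS ht ht0]
    ext x
    simp only [Set.mem_setOf_eq, Set.mem_image, Set.mem_Iio, Finset.coe_image,
      Finset.mem_coe, Finset.mem_filter, Finset.mem_range, Finset.mem_image]
    constructor
    · rintro ⟨⟨i, hi, rfl⟩, hPx⟩
      refine ⟨i, ⟨hi, ?_⟩, rfl⟩
      have h2 := (hP (wmin S t i)).mp hPx
      rwa [(wmin_spec hS ht0 hi).2] at h2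
    · rintro ⟨i, ⟨hi, hPi⟩, rfl⟩
      refine ⟨⟨i, hi, rfl⟩, ?_⟩
      have h := (wmin_spec hS ht0 hi).2
      exact (hP _).mpr (by rw [h]; exact hPi)
  rw [hsetEq, finsum_mem_coe_finset, Finset.sum_image hinj]

lemma odd_even_sum (m : ℕ) :
    ∑ i ∈ (Finset.range (2*m)).filter (fun i => Odd i), i
      = (∑ i ∈ (Finset.range (2*m)).filter (fun i => Even i), i) + m := by
  induction m with
  | zero => simp
  | succ n ih =>
    have h : 2 * (n + 1) = (2*n + 1) + 1 := by ring
    rw [h, Finset.range_add_one, Finset.range_add_one, Finset.filter_insert, Finset.filter_insert,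
      Finset.filter_insert, Finset.filter_insert]
    have ho : Odd (2*n + 1) := ⟨n, by ring⟩
    have he : Even (2*n) := ⟨n, by ring⟩
    have hno : ¬ Odd (2*n) := by simp [Nat.odd_iff]
    have hne : ¬ Even (2*n+1) := by simp [Nat.even_iff]
    simp only [ho, he, hno, hne, if_pos, if_neg, not_false_iff]
    rw [Finset.sum_insert (by simp), Finset.sum_insert (by simp)]
    omega

end aux

/-- For `S` a numerical semigroup and `t` a nonzero even element of `S` with Apéry set
`𝒜 = Ap(S;t)`, we have `O(G(S)) - E(G(S)) = -1/2 + (σ_O(𝒜) - σ_E(𝒜))/t`, i.e.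
`2t(O(G(S)) - E(G(S))) = -t + 2(σ_O(𝒜) - σ_E(𝒜))`. -/
theorem parity_difference_even (S : Set ℕ) (hS : IsNumericalSemigroup S)
    (t : ℕ) (ht : t ∈ S) (ht0 : t ≠ 0) (hteven : Even t) :
    2 * (t : ℤ) * ((countOdd Sᶜ : ℤ) - (countEven Sᶜ : ℤ))
      = -(t : ℤ) + 2 * ((sumOdd (aperySet S t) : ℤ) - (sumEven (aperySet S t) : ℤ)) := by
  classical
  have hOdd : ∀ x : ℕ, Odd x ↔ Odd (x % t) := fun x => parity_of_mod hteven rfl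
  have hEven : ∀ x : ℕ, Even x ↔ Even (x % t) := by
    intro x
    rw [← Nat.not_odd_iff_even, ← Nat.not_odd_iff_even, hOdd x]
  set FO := (Finset.range t).filter (fun i => Odd i) with hFO
  set FE := (Finset.range t).filter (fun i => Even i) with hFE
  have hcO : countOdd Sᶜ = ∑ i ∈ FO, wmin S t i / t :=
    gap_count hS ht ht0 (fun i => Odd i) hOdd
  have hcE : countEven Sᶜ = ∑ i ∈ FE, wmin S t i / t :=
    gap_count hS ht ht0 (fun i => Even i) hEven
  have hsO : sumOdd (aperySet S t) = ∑ i ∈ FO, wmin S t i :=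
    apery_sum hS ht ht0 (fun i => Odd i) hOdd
  have hsE : sumEven (aperySet S t) = ∑ i ∈ FE, wmin S t i :=
    apery_sum hS ht ht0 (fun i => Even i) hEven
  have hdecomp : ∀ i ∈ Finset.range t, wmin S t i = i + (wmin S t i / t) * t := by
    intro i hi
    rw [Finset.mem_range] at hi
    have h1 := (wmin_spec hS ht0 hi).2
    have h2 := Nat.div_add_mod (wmin S t i) t
    rw [mul_comm] at h2
    omega
  have hsplit : ∀ F : Finset ℕ, F ⊆ Finset.range t →
      ∑ i ∈ F, wmin S t i = (∑ i ∈ F, i) + (∑ i ∈ F, wmin S t i / t) * t := by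
    intro F hF
    rw [Finset.sum_mul]
    rw [← Finset.sum_add_distrib]
    exact Finset.sum_congr rfl (fun i hi => hdecomp i (hF hi))
  have hsO' := hsO.trans (hsplit FO (Finset.filter_subset _ _))
  have hsE' := hsE.trans (hsplit FE (Finset.filter_subset _ _))
  obtain ⟨m, hm⟩ := hteven
  have hm2 : t = 2 * m := by omega
  have hIsum : ∑ i ∈ FO, i = (∑ i ∈ FE, i) + m := by
    rw [hFO, hFE, hm2]
    exact odd_even_sum m
  set cO := ∑ i ∈ FO, wmin S t i / t with hcOd
  set cE := ∑ i ∈ FE, wmin S t i / t with hcEd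
  set oI := ∑ i ∈ FO, i with hoI
  set eI := ∑ i ∈ FE, i with heI
  rw [hcO, hcE, hsO', hsE']
  push_cast
  rw [show ((oI : ℕ) : ℤ) = ((eI : ℕ) : ℤ) + m by exact_mod_cast hIsum,
    show (t : ℤ) = 2 * m by exact_mod_cast hm2]
  ring
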